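/- Let F be a finite field of order Q, k ≥ 2, and L a set of ℓ polynomials of degree < k over F. For α, β ∈ F define χ_{α,β}(f) = e(tr(β·f(α))) as a character of the additive group of polynomials of degree < k. Then Σ over α ∈ F and β ∈ F \ {0} of |Q^(−k/2)·Σ_{f∈L} χ_{α,β}(f)|² is at most Q^(−k+1)·ℓ·(Q + ℓ(k−1)). -/

import Mathlib

open Finset

/-- Evaluation of the polynomial with coefficient vector `c` (degree `< k`) at `x`. -/
def evalc {F : Type*} [CommSemiring F] {k : ℕ} (c : Fin k → F) (x : F) : F :=
  ∑ i : Fin k, c i * x ^ (i : ℕ)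

lemma aux_card_roots {F : Type*} [Field F] [Fintype F] [DecidableEq F] {k : ℕ}
    {f g : Fin k → F} (hfg : f ≠ g) :
    ((univ : Finset F).filter (fun α => evalc f α = evalc g α)).card ≤ k - 1 := by
  set q : Polynomial F := ∑ i : Fin k, Polynomial.C (f i - g i) * Polynomial.X ^ (i : ℕ) with hq
  have hcoeff : ∀ i : Fin k, q.coeff i = f i - g i := by
    intro i
    rw [hq, Polynomial.finset_sum_coeff]
    rw [Finset.sum_eq_single i]
    · simp [Polynomial.coeff_C_mul, Polynomial.coeff_X_pow, sub_mul]
    · intro j _ hj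
      have : ((i : Fin k) : ℕ) ≠ (j : ℕ) := fun h => hj (Fin.ext h.symm)
      simp [Polynomial.coeff_C_mul, Polynomial.coeff_X_pow, sub_mul, this, if_neg this]
    · simp
  have hq0 : q ≠ 0 := by
    intro h
    apply hfg; funext i
    have := hcoeff i
    rw [h] at this
    simpa [sub_eq_zero, eq_comm] using this
  have hdeg : q.natDegree ≤ k - 1 := by
    apply Polynomial.natDegree_sum_le_of_forall_le
    intro i _
    refine le_trans (Polynomial.natDegree_mul_le) ?_
    simp only [Polynomial.natDegree_C, Polynomial.natDegree_X_pow, zero_add]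
    omega
  have heval : ∀ α : F, q.eval α = evalc f α - evalc g α := by
    intro α
    simp [hq, evalc, Polynomial.eval_finset_sum, sub_mul, Finset.sum_sub_distrib]
  calc ((univ : Finset F).filter (fun α => evalc f α = evalc g α)).card
      ≤ q.roots.toFinset.card := by
        apply Finset.card_le_card
        intro α hα
        simp only [Finset.mem_filter, Finset.mem_univ, true_and] at hα
        simp only [Multiset.mem_toFinset, Polynomial.mem_roots hq0, Polynomial.IsRoot.def,
          heval α, sub_eq_zero]
        exact hα
    _ ≤ Multiset.card q.roots := Multiset.toFinset_card_le _
    _ ≤ q.natDegree := Polynomial.card_roots' q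
    _ ≤ k - 1 := hdeg

theorem stmt10 {F : Type*} [Field F] [Fintype F] [DecidableEq F] (p Q k ℓ : ℕ)
    [Fact p.Prime] [CharP F p] [Algebra (ZMod p) F]
    (hQ : Fintype.card F = Q) (hk : 2 ≤ k)
    (L : Finset (Fin k → F)) (hL : L.card = ℓ) :
    let e : ZMod p → ℂ := fun t => Complex.exp (2 * Real.pi * Complex.I * (t.val : ℂ) / p)
    -- the character `χ_{α,β} f = e (tr (β · f(α)))`
    let χ : F → F → (Fin k → F) → ℂ :=
      fun α β f => e (Algebra.trace (ZMod p) F (β * evalc f α))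
    ∑ α : F, ∑ β ∈ Finset.univ.filter (fun β : F => β ≠ 0),
        ((Q : ℝ) ^ (-(k : ℝ) / 2) * ‖∑ f ∈ L, χ α β f‖) ^ 2
      ≤ (Q : ℝ) ^ ((1 : ℝ) - k) * ℓ * (Q + ℓ * (k - 1)) := by
  intro e χ
  have hp : p.Prime := Fact.out
  haveI : NeZero p := ⟨hp.ne_zero⟩
  have hprim : IsPrimitiveRoot (Complex.exp (2 * Real.pi * Complex.I / p)) p :=
    Complex.isPrimitiveRoot_exp p hp.ne_zero
  set ψ : AddChar F ℂ :=
    (AddChar.zmodChar p hprim.pow_eq_one).compAddMonoidHom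
      (Algebra.trace (ZMod p) F).toAddMonoidHom with hψ
  have hψapp : ∀ x : F, ψ x = e (Algebra.trace (ZMod p) F x) := by
    intro x
    rw [hψ]
    simp only [AddChar.compAddMonoidHom_apply, LinearMap.toAddMonoidHom_coe,
      AddChar.zmodChar_apply, e]
    rw [← Complex.exp_nat_mul]
    congr 1
    ring
  -- ψ is nontrivial, hence primitive
  haveI : FiniteDimensional (ZMod p) F := inferInstance
  haveI : Algebra.IsSeparable (ZMod p) F := inferInstance
  have hψne : ψ ≠ 1 := by
    obtain ⟨a, ha⟩ := Algebra.trace_surjective (ZMod p) F 1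
    rw [AddChar.ne_one_iff]
    refine ⟨a, ?_⟩
    rw [hψ]
    simp only [AddChar.compAddMonoidHom_apply, LinearMap.toAddMonoidHom_coe,
      AddChar.zmodChar_apply, ha]
    rw [ZMod.val_one'' hp.ne_one, pow_one]
    exact hprim.ne_one hp.one_lt
  have hψprim : ψ.IsPrimitive := AddChar.IsPrimitive.of_ne_one hψne
  have hringChar : 0 < ringChar F := by
    rw [ringChar.eq F p]; exact hp.pos
  have hconj : ∀ x : F, (starRingEnd ℂ) (ψ x) = ψ (-x) := by
    intro x
    rw [AddChar.starComp_apply hringChar, AddChar.inv_apply]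
  -- orthogonality
  have key : ∀ d : F, ∑ β ∈ Finset.univ.filter (fun β : F => β ≠ 0), ψ (β * d)
      = (if d = 0 then (Q : ℂ) else 0) - 1 := by
    intro d
    have h1 : ∑ β : F, ψ (β * d) = if d = 0 then (Fintype.card F : ℂ) else 0 := by
      rw [AddChar.sum_mulShift d hψprim]
      split <;> simp
    have h2 : (Finset.univ.filter (fun β : F => β ≠ 0)) = Finset.univ.erase 0 := by
      ext x; simp [Finset.mem_erase, and_comm]
    rw [h2, eq_sub_iff_add_eq]
    have h3 : ∑ β ∈ Finset.univ.erase 0, ψ (β * d) + ψ ((0 : F) * d) = ∑ β : F, ψ (β * d) :=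
      Finset.sum_erase_add Finset.univ _ (Finset.mem_univ 0)
    rw [← show ψ ((0 : F) * d) = 1 by rw [zero_mul, AddChar.map_zero_eq_one], h3, h1, hQ]
  set S : F → F → ℂ := fun α β => ∑ f ∈ L, ψ (β * evalc f α) with hS
  have hχS : ∀ α β : F, (∑ f ∈ L, χ α β f) = S α β := by
    intro α β
    refine Finset.sum_congr rfl fun f _ => ?_
    rw [hψapp]
  -- the complex computation for each α
  have hC : ∀ α : F, ∑ β ∈ Finset.univ.filter (fun β : F => β ≠ 0),
      S α β * (starRingEnd ℂ) (S α β)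
      = ∑ f ∈ L, ∑ g ∈ L, ((if evalc f α = evalc g α then (Q : ℂ) else 0) - 1) := by
    intro α
    have step1 : ∀ β : F, S α β * (starRingEnd ℂ) (S α β)
        = ∑ f ∈ L, ∑ g ∈ L, ψ (β * (evalc f α - evalc g α)) := by
      intro β
      rw [hS]
      rw [map_sum]
      rw [Finset.sum_mul_sum]
      refine Finset.sum_congr rfl fun f _ => Finset.sum_congr rfl fun g _ => ?_
      rw [hconj, ← AddChar.map_add_eq_mul]
      congr 1
      ring
    calc ∑ β ∈ Finset.univ.filter (fun β : F => β ≠ 0), S α β * (starRingEnd ℂ) (S α β)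
        = ∑ β ∈ Finset.univ.filter (fun β : F => β ≠ 0),
            ∑ f ∈ L, ∑ g ∈ L, ψ (β * (evalc f α - evalc g α)) :=
          Finset.sum_congr rfl fun β _ => step1 β
      _ = ∑ f ∈ L, ∑ g ∈ L, ∑ β ∈ Finset.univ.filter (fun β : F => β ≠ 0),
            ψ (β * (evalc f α - evalc g α)) := by
          rw [Finset.sum_comm]
          exact Finset.sum_congr rfl fun f _ => Finset.sum_comm
      _ = ∑ f ∈ L, ∑ g ∈ L, ((if evalc f α = evalc g α then (Q : ℂ) else 0) - 1) := by
          refine Finset.sum_congr rfl fun f _ => Finset.sum_congr rfl fun g _ => ?_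
          rw [key]
          congr 2
          simp [sub_eq_zero]
  -- the real identity for each α
  have hR : ∀ α : F, ∑ β ∈ Finset.univ.filter (fun β : F => β ≠ 0),
      (‖S α β‖) ^ 2
      = ∑ f ∈ L, ∑ g ∈ L, ((if evalc f α = evalc g α then (Q : ℝ) else 0) - 1) := by
    intro α
    have := congrArg Complex.re (hC α)
    rw [Complex.re_sum] at this
    rw [show (∑ f ∈ L, ∑ g ∈ L, ((if evalc f α = evalc g α then (Q : ℂ) else 0) - 1)).re
        = ∑ f ∈ L, ∑ g ∈ L, ((if evalc f α = evalc g α then (Q : ℝ) else 0) - 1) by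
      rw [Complex.re_sum]
      refine Finset.sum_congr rfl fun f _ => ?_
      rw [Complex.re_sum]
      refine Finset.sum_congr rfl fun g _ => ?_
      split <;> simp] at this
    rw [← this]
    refine Finset.sum_congr rfl fun β _ => ?_
    rw [Complex.mul_conj, Complex.sq_norm]
    simp
  -- counting bound
  have hQpos : 0 < (Q : ℝ) := by
    have := Fintype.card_pos (α := F)
    rw [hQ] at this
    exact_mod_cast this
  have hbound : ∑ α : F, ∑ f ∈ L, ∑ g ∈ L,
      ((if evalc f α = evalc g α then (Q : ℝ) else 0) - 1)
      ≤ (ℓ : ℝ) * Q ^ 2 + (ℓ : ℝ) ^ 2 * Q * ((k : ℝ) - 1) := by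
    rw [Finset.sum_comm]
    have hterm : ∀ f ∈ L, ∑ α : F, ∑ g ∈ L,
        ((if evalc f α = evalc g α then (Q : ℝ) else 0) - 1)
        ≤ ∑ g ∈ L, (if f = g then (Q : ℝ) ^ 2 else (Q : ℝ) * ((k : ℝ) - 1)) := by
      intro f _
      rw [Finset.sum_comm]
      refine Finset.sum_le_sum fun g _ => ?_
      have hsum : ∑ α : F, ((if evalc f α = evalc g α then (Q : ℝ) else 0) - 1)
          = (Q : ℝ) * ((univ : Finset F).filter (fun α => evalc f α = evalc g α)).card
            - Q := by
        rw [Finset.sum_sub_distrib, ← Finset.sum_filter, Finset.sum_const, Finset.sum_const,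
          nsmul_eq_mul, nsmul_eq_mul, Finset.card_univ, hQ]
        ring
      rw [hsum]
      by_cases hfg : f = g
      · rw [if_pos hfg]
        have hN : (((univ : Finset F).filter
            (fun α => evalc f α = evalc g α)).card : ℝ) ≤ Q := by
          have := Finset.card_filter_le (univ : Finset F)
            (fun α => evalc f α = evalc g α)
          rw [Finset.card_univ, hQ] at this
          exact_mod_cast this
        nlinarith
      · rw [if_neg hfg]
        have hN : (((univ : Finset F).filter
            (fun α => evalc f α = evalc g α)).card : ℝ) ≤ (k : ℝ) - 1 := by
          have h1 := aux_card_roots (F := F) hfg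
          have h2 : ((k - 1 : ℕ) : ℝ) = (k : ℝ) - 1 := by
            have : 1 ≤ k := by omega
            push_cast [this]
            ring
          calc (((univ : Finset F).filter
              (fun α => evalc f α = evalc g α)).card : ℝ)
              ≤ ((k - 1 : ℕ) : ℝ) := by exact_mod_cast h1
            _ = (k : ℝ) - 1 := h2
        nlinarith
    calc ∑ f ∈ L, ∑ α : F, ∑ g ∈ L,
        ((if evalc f α = evalc g α then (Q : ℝ) else 0) - 1)
        ≤ ∑ f ∈ L, ∑ g ∈ L, (if f = g then (Q : ℝ) ^ 2 else (Q : ℝ) * ((k : ℝ) - 1)) :=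
          Finset.sum_le_sum hterm
      _ ≤ ∑ f ∈ L, ∑ g ∈ L,
            ((if f = g then (Q : ℝ) ^ 2 else 0) + (Q : ℝ) * ((k : ℝ) - 1)) := by
          refine Finset.sum_le_sum fun f _ => Finset.sum_le_sum fun g _ => ?_
          have hk1 : (0 : ℝ) ≤ (Q : ℝ) * ((k : ℝ) - 1) := by
            have : (1 : ℝ) ≤ (k : ℝ) := by exact_mod_cast Nat.one_le_of_lt hk
            nlinarith
          split <;> nlinarith
      _ ≤ (ℓ : ℝ) * Q ^ 2 + (ℓ : ℝ) ^ 2 * Q * ((k : ℝ) - 1) := by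
          rw [Finset.sum_congr rfl (fun f hf => Finset.sum_add_distrib)]
          rw [Finset.sum_add_distrib]
          have e1 : ∑ f ∈ L, ∑ g ∈ L, (if f = g then (Q : ℝ) ^ 2 else 0)
              = (ℓ : ℝ) * Q ^ 2 := by
            have : ∀ f ∈ L, ∑ g ∈ L, (if f = g then (Q : ℝ) ^ 2 else 0) = (Q : ℝ) ^ 2 := by
              intro f hf
              rw [Finset.sum_ite_eq L f (fun _ => (Q : ℝ) ^ 2), if_pos hf]
            rw [Finset.sum_congr rfl this, Finset.sum_const, hL, nsmul_eq_mul]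
          have e2 : ∑ f ∈ L, ∑ g ∈ L, (Q : ℝ) * ((k : ℝ) - 1)
              = (ℓ : ℝ) ^ 2 * Q * ((k : ℝ) - 1) := by
            rw [Finset.sum_const, Finset.sum_const, hL, nsmul_eq_mul, nsmul_eq_mul]
            ring
          rw [e1, e2]
  -- putting it together
  have hc2 : ((Q : ℝ) ^ (-(k : ℝ) / 2)) ^ 2 = (Q : ℝ) ^ (-(k : ℝ)) := by
    rw [sq, ← Real.rpow_add hQpos]
    norm_num
  have lhs_eq : ∑ α : F, ∑ β ∈ Finset.univ.filter (fun β : F => β ≠ 0),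
      ((Q : ℝ) ^ (-(k : ℝ) / 2) * ‖∑ f ∈ L, χ α β f‖) ^ 2
      = (Q : ℝ) ^ (-(k : ℝ)) *
        ∑ α : F, ∑ β ∈ Finset.univ.filter (fun β : F => β ≠ 0),
          (‖S α β‖) ^ 2 := by
    rw [Finset.mul_sum]
    refine Finset.sum_congr rfl fun α _ => ?_
    rw [Finset.mul_sum]
    refine Finset.sum_congr rfl fun β _ => ?_
    rw [hχS, mul_pow, hc2]
  rw [lhs_eq]
  have rhs_eq : (Q : ℝ) ^ ((1 : ℝ) - k) * ℓ * (Q + ℓ * ((k : ℝ) - 1))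
      = (Q : ℝ) ^ (-(k : ℝ)) *
        ((ℓ : ℝ) * Q ^ 2 + (ℓ : ℝ) ^ 2 * Q * ((k : ℝ) - 1)) := by
    rw [show (1 : ℝ) - k = 1 + (-(k : ℝ)) by ring, Real.rpow_add hQpos, Real.rpow_one]
    ring
  rw [rhs_eq]
  apply mul_le_mul_of_nonneg_left _ (Real.rpow_nonneg hQpos.le _)
  calc ∑ α : F, ∑ β ∈ Finset.univ.filter (fun β : F => β ≠ 0), (‖S α β‖) ^ 2
      = ∑ α : F, ∑ f ∈ L, ∑ g ∈ L,
          ((if evalc f α = evalc g α then (Q : ℝ) else 0) - 1) :=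
        Finset.sum_congr rfl fun α _ => hR α
    _ ≤ (ℓ : ℝ) * Q ^ 2 + (ℓ : ℝ) ^ 2 * Q * ((k : ℝ) - 1) := hbound
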